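/- arXiv:1810.10030 — 3 statements merged into one kernel-verified Lean document; each statement's English description precedes it below -/
import Mathlib

section
/- Let V be a nontrivial real Banach space, a ∈ ℝ, b ∈ [a,∞), s ∈ [a,b], f : [a,b] × V → V continuous, and X, Y : [a,b] → V continuous functions satisfying X_t − ∫_s^t f(τ, X_τ) dτ = Y_t − ∫_s^t f(τ, Y_τ) dτ for all t ∈ [a,b]. Assume f is locally Lipschitz in the second variable, uniformly in time: for every x ∈ V there exists r > 0 such that sup over τ ∈ [a,b] and y, z in the closed r-ball around x with y ≠ z of ‖f(τ,y) − f(τ,z)‖/‖y − z‖ is finite. Then X_t = Y_t for all t ∈ [a,b]. -/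
open MeasureTheory

/-- Uniqueness for ODE integral equations: if `f` is continuous on
`[a,b] × V` and locally Lipschitz in the second variable uniformly in time, and
`X, Y : [a,b] → V` are continuous with
`X_t - ∫_s^t f(τ, X_τ) dτ = Y_t - ∫_s^t f(τ, Y_τ) dτ` for all `t ∈ [a,b]`,
then `X = Y` on `[a,b]`. -/
theorem ode_uniqueness
    {V : Type*} [NormedAddCommGroup V] [NormedSpace ℝ V] [CompleteSpace V]
    [Nontrivial V] {a b s : ℝ} (hab : a ≤ b) (hs : s ∈ Set.Icc a b)
    (f : ℝ → V → V)
    (hf : ContinuousOn (fun p : ℝ × V => f p.1 p.2) (Set.Icc a b ×ˢ Set.univ))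
    (X Y : ℝ → V) (hX : ContinuousOn X (Set.Icc a b)) (hY : ContinuousOn Y (Set.Icc a b))
    (heq : ∀ t ∈ Set.Icc a b,
      X t - ∫ τ in s..t, f τ (X τ) = Y t - ∫ τ in s..t, f τ (Y τ))
    (hlip : ∀ x : V, ∃ r : ℝ, 0 < r ∧ ∃ C : ℝ,
      ∀ τ ∈ Set.Icc a b, ∀ y z : V, ‖x - y‖ ≤ r → ‖x - z‖ ≤ r →
        ‖f τ y - f τ z‖ ≤ C * ‖y - z‖) :
    ∀ t ∈ Set.Icc a b, X t = Y t := by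
  set I := Set.Icc a b with hI
  have hfX : ContinuousOn (fun τ => f τ (X τ)) I :=
    ContinuousOn.comp (f := fun τ => (τ, X τ)) (s := I) hf (continuousOn_id.prodMk hX) (fun t ht => ⟨ht, trivial⟩)
  have hfY : ContinuousOn (fun τ => f τ (Y τ)) I :=
    ContinuousOn.comp (f := fun τ => (τ, Y τ)) (s := I) hf (continuousOn_id.prodMk hY) (fun t ht => ⟨ht, trivial⟩)
  have hsub : ∀ u ∈ I, ∀ v ∈ I, Set.uIcc u v ⊆ I := fun u hu v hv =>
    Set.uIcc_subset_Icc hu hv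
  have hintX : ∀ u ∈ I, ∀ v ∈ I, IntervalIntegrable (fun τ => f τ (X τ)) volume u v :=
    fun u hu v hv => (hfX.mono (hsub u hu v hv)).intervalIntegrable
  have hintY : ∀ u ∈ I, ∀ v ∈ I, IntervalIntegrable (fun τ => f τ (Y τ)) volume u v :=
    fun u hu v hv => (hfY.mono (hsub u hu v hv)).intervalIntegrable
  -- key identity
  have key : ∀ t0 ∈ I, ∀ t ∈ I, X t - Y t
      = (X t0 - Y t0) + ∫ τ in t0..t, (f τ (X τ) - f τ (Y τ)) := by
    intro t0 ht0 t ht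
    have h1 := heq t ht
    have h2 := heq t0 ht0
    have hX1 : (∫ τ in s..t0, f τ (X τ)) + (∫ τ in t0..t, f τ (X τ))
        = ∫ τ in s..t, f τ (X τ) :=
      intervalIntegral.integral_add_adjacent_intervals (hintX s hs t0 ht0) (hintX t0 ht0 t ht)
    have hY1 : (∫ τ in s..t0, f τ (Y τ)) + (∫ τ in t0..t, f τ (Y τ))
        = ∫ τ in s..t, f τ (Y τ) :=
      intervalIntegral.integral_add_adjacent_intervals (hintY s hs t0 ht0) (hintY t0 ht0 t ht)
    have hsubint : (∫ τ in t0..t, (f τ (X τ) - f τ (Y τ)))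
        = (∫ τ in t0..t, f τ (X τ)) - ∫ τ in t0..t, f τ (Y τ) :=
      intervalIntegral.integral_sub (hintX t0 ht0 t ht) (hintY t0 ht0 t ht)
    have h1' : X t - Y t = (∫ τ in s..t, f τ (X τ)) - ∫ τ in s..t, f τ (Y τ) :=
      sub_eq_sub_iff_sub_eq_sub.mp h1
    have h2' : X t0 - Y t0 = (∫ τ in s..t0, f τ (X τ)) - ∫ τ in s..t0, f τ (Y τ) :=
      sub_eq_sub_iff_sub_eq_sub.mp h2
    rw [hsubint, h1', h2', ← hX1, ← hY1]
    abel
  -- local uniqueness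
  have loc : ∀ t0 ∈ I, X t0 = Y t0 → ∃ δ > 0, ∀ t ∈ I, |t - t0| ≤ δ → X t = Y t := by
    intro t0 ht0 hXY0
    obtain ⟨r, hr, C, hC⟩ := hlip (X t0)
    set C' := max C 0 with hC'
    have hC'0 : 0 ≤ C' := le_max_right _ _
    have hC2 : ∀ τ ∈ I, ∀ y z : V, ‖X t0 - y‖ ≤ r → ‖X t0 - z‖ ≤ r →
        ‖f τ y - f τ z‖ ≤ C' * ‖y - z‖ := by
      intro τ hτ y z hy hz
      exact (hC τ hτ y z hy hz).trans
        (mul_le_mul_of_nonneg_right (le_max_left _ _) (norm_nonneg _))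
    obtain ⟨δ1, hδ1, hX1⟩ := Metric.continuousWithinAt_iff.mp (hX t0 ht0) r hr
    obtain ⟨δ2, hδ2, hY1⟩ := Metric.continuousWithinAt_iff.mp (hY t0 ht0) r hr
    refine ⟨min (min δ1 δ2 / 2) (1 / (2 * (C' + 1))), by positivity, ?_⟩
    set δ := min (min δ1 δ2 / 2) (1 / (2 * (C' + 1))) with hδdef
    have hδpos : 0 < δ := by positivity
    have hδ1' : δ < δ1 := lt_of_le_of_lt (min_le_left _ _)
      (by simp only [div_lt_iff₀ (by norm_num : (0:ℝ) < 2)]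
          nlinarith [min_le_left δ1 δ2])
    have hδ2' : δ < δ2 := lt_of_le_of_lt (min_le_left _ _)
      (by simp only [div_lt_iff₀ (by norm_num : (0:ℝ) < 2)]
          nlinarith [min_le_right δ1 δ2])
    have hδC : C' * δ ≤ 1 / 2 := by
      have h1 : δ ≤ 1 / (2 * (C' + 1)) := min_le_right _ _
      rw [le_div_iff₀ (by positivity : (0:ℝ) < 2 * (C' + 1))] at h1
      nlinarith
    -- ball estimates
    have hball : ∀ t ∈ I, |t - t0| ≤ δ → ‖X t0 - X t‖ ≤ r ∧ ‖X t0 - Y t‖ ≤ r := by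
      intro t ht hd
      have hdist : dist t t0 < δ1 := lt_of_le_of_lt (by rwa [Real.dist_eq]) hδ1'
      have hdist2 : dist t t0 < δ2 := lt_of_le_of_lt (by rwa [Real.dist_eq]) hδ2'
      constructor
      · have := hX1 ht hdist
        rw [dist_eq_norm] at this
        rw [norm_sub_rev]
        exact this.le
      · have := hY1 ht hdist2
        rw [dist_eq_norm, ← hXY0] at this
        rw [norm_sub_rev]
        exact this.le
    -- compact set
    set K := I ∩ Set.Icc (t0 - δ) (t0 + δ) with hK
    have hKI : K ⊆ I := Set.inter_subset_left
    have hKmem : ∀ t ∈ K, |t - t0| ≤ δ := by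
      intro t ht
      rw [abs_sub_le_iff]
      constructor <;> [linarith [ht.2.2]; linarith [ht.2.1]]
    have hKc : IsCompact K := (isCompact_Icc).inter_right isClosed_Icc
    have ht0K : t0 ∈ K := ⟨ht0, by constructor <;> linarith⟩
    have hKoc : K.OrdConnected := (Set.ordConnected_Icc).inter Set.ordConnected_Icc
    have hg : ContinuousOn (fun t => ‖X t - Y t‖) K :=
      ((hX.mono hKI).sub (hY.mono hKI)).norm
    obtain ⟨t1, ht1K, ht1max⟩ := hKc.exists_isMaxOn ⟨t0, ht0K⟩ hg
    set M := ‖X t1 - Y t1‖ with hM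
    have hM0 : 0 ≤ M := norm_nonneg _
    have hMbound : ∀ t ∈ K, ‖X t - Y t‖ ≤ M := fun t ht => ht1max ht
    -- estimate
    have hMle : M ≤ C' * M * δ := by
      have hid := key t0 ht0 t1 (hKI ht1K)
      rw [hXY0, sub_self, zero_add] at hid
      have hnorm : ‖∫ τ in t0..t1, (f τ (X τ) - f τ (Y τ))‖ ≤ C' * M * |t1 - t0| := by
        apply intervalIntegral.norm_integral_le_of_norm_le_const
        intro τ hτ
        have hτK : τ ∈ K := hKoc.uIcc_subset ht0K ht1K (Set.uIoc_subset_uIcc hτ)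
        have hb := hball τ (hKI hτK) (hKmem τ hτK)
        calc ‖f τ (X τ) - f τ (Y τ)‖ ≤ C' * ‖X τ - Y τ‖ :=
              hC2 τ (hKI hτK) _ _ hb.1 hb.2
          _ ≤ C' * M := mul_le_mul_of_nonneg_left (hMbound τ hτK) hC'0
      calc M = ‖∫ τ in t0..t1, (f τ (X τ) - f τ (Y τ))‖ := by rw [hM, hid]
        _ ≤ C' * M * |t1 - t0| := hnorm
        _ ≤ C' * M * δ := by
            apply mul_le_mul_of_nonneg_left _ (by positivity)
            exact hKmem t1 ht1K
    have hMzero : M = 0 := by nlinarith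
    intro t ht hd
    have htK : t ∈ K := ⟨ht, by rw [abs_sub_le_iff] at hd; constructor <;> linarith [hd.1, hd.2]⟩
    have := hMbound t htK
    rw [hMzero] at this
    exact sub_eq_zero.mp (norm_le_zero_iff.mp this)
  -- X s = Y s
  have hs0 : X s = Y s := by
    have h := heq s hs
    simpa [intervalIntegral.integral_same] using h
  -- connectedness argument
  haveI : PreconnectedSpace I := Subtype.preconnectedSpace isPreconnected_Icc
  set E : Set I := {t : I | X ↑t = Y ↑t} with hE
  have hclosed : IsClosed E := isClosed_eq hX.restrict hY.restrict
  have hopen : IsOpen E := by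
    rw [Metric.isOpen_iff]
    intro t0 ht0
    obtain ⟨δ, hδ, h⟩ := loc ↑t0 t0.2 ht0
    refine ⟨δ, hδ, fun t ht => ?_⟩
    have : |(↑t : ℝ) - ↑t0| ≤ δ := by
      have := ht
      rw [Metric.mem_ball, Subtype.dist_eq, Real.dist_eq] at this
      exact this.le
    exact h ↑t t.2 this
  have hEuniv : E = Set.univ :=
    IsClopen.eq_univ ⟨hclosed, hopen⟩ ⟨⟨s, hs⟩, hs0⟩
  intro t ht
  have : (⟨t, ht⟩ : I) ∈ E := hEuniv ▸ Set.mem_univ _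
  exact this
end

section
/- Let V be a nontrivial real Banach space, T ∈ (0,∞), ∠_T = {(s,t) ∈ [0,T]² : s ≤ t}, f ∈ C^{0,1}([0,T] × V, V) with spatial derivative f_{0,1}, and let F : C(∠_T, V) → C(∠_T, V) be defined by (F(y))(s,t) = ∫_s^t f(τ, y(s,τ)) dτ. Then F is continuously Fréchet differentiable, and for all y, h ∈ C(∠_T, V) and (s,t) ∈ ∠_T, (F'(y)h)(s,t) = ∫_s^t f_{0,1}(τ, y(s,τ)) h(s,τ) dτ. -/
open MeasureTheory
open scoped Classical

/-- The compact triangle `∠_T = {(s,t) ∈ [0,T]² : s ≤ t}`. -/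
def triangle (T : ℝ) : Set (ℝ × ℝ) := {p | 0 ≤ p.1 ∧ p.1 ≤ p.2 ∧ p.2 ≤ T}

theorem isCompact_triangle (T : ℝ) : IsCompact (triangle T) := by
  have hclosed : IsClosed (triangle T) := by
    have : triangle T =
        {p : ℝ × ℝ | 0 ≤ p.1} ∩ ({p : ℝ × ℝ | p.1 ≤ p.2} ∩ {p : ℝ × ℝ | p.2 ≤ T}) := by
      ext p; simp [triangle, Set.mem_inter_iff, and_assoc]
    rw [this]
    exact (isClosed_le continuous_const continuous_fst).inter
      ((isClosed_le continuous_fst continuous_snd).inter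
        (isClosed_le continuous_snd continuous_const))
  refine (isCompact_Icc.prod isCompact_Icc :
      IsCompact (Set.Icc (0 : ℝ) T ×ˢ Set.Icc (0 : ℝ) T)).of_isClosed_subset hclosed ?_
  rintro ⟨s, t⟩ ⟨h1, h2, h3⟩
  exact ⟨⟨h1, h2.trans h3⟩, ⟨h1.trans h2, h3⟩⟩

instance (T : ℝ) : CompactSpace (triangle T) :=
  isCompact_iff_compactSpace.mp (isCompact_triangle T)

/-- The nonlinear integral operator
`(F(y))(s,t) = ∫_s^t f(τ, y(s,τ)) dτ` on `C(∠_T, V)` is continuously Fréchet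
differentiable with `(F'(y)h)(s,t) = ∫_s^t f_{0,1}(τ, y(s,τ)) h(s,τ) dτ`. -/
theorem integral_operator_c1
    {V : Type*} [NormedAddCommGroup V] [NormedSpace ℝ V] [CompleteSpace V]
    [Nontrivial V] {T : ℝ} (hT : 0 < T)
    (f : ℝ → V → V) (f' : ℝ → V → V →L[ℝ] V)
    (hf : ContinuousOn (fun p : ℝ × V => f p.1 p.2) (Set.Icc 0 T ×ˢ Set.univ))
    (hdiff : ∀ t ∈ Set.Icc (0 : ℝ) T, ∀ x : V, HasFDerivAt (f t) (f' t x) x)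
    (hf' : ContinuousOn (fun p : ℝ × V => f' p.1 p.2) (Set.Icc 0 T ×ˢ Set.univ))
    (F : C(triangle T, V) → C(triangle T, V))
    (hF : ∀ (y : C(triangle T, V)) (p : triangle T),
      F y p = ∫ τ in (p : ℝ × ℝ).1..(p : ℝ × ℝ).2,
        (if hτ : ((p : ℝ × ℝ).1, τ) ∈ triangle T then f τ (y ⟨_, hτ⟩) else 0)) :
    ∃ D : C(triangle T, V) → C(triangle T, V) →L[ℝ] C(triangle T, V),
      Continuous D ∧
      (∀ y : C(triangle T, V), HasFDerivAt F (D y) y) ∧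
      ∀ (y h : C(triangle T, V)) (p : triangle T),
        D y h p = ∫ τ in (p : ℝ × ℝ).1..(p : ℝ × ℝ).2,
          (if hτ : ((p : ℝ × ℝ).1, τ) ∈ triangle T
            then f' τ (y ⟨_, hτ⟩) (h ⟨_, hτ⟩) else 0) := by
  classical
  have hT0 : (0:ℝ) ≤ T := hT.le
  -- the clamp to `[0,T]`
  set c : ℝ → ℝ := fun t => max 0 (min t T) with hc_def
  have hc_mem : ∀ t, c t ∈ Set.Icc (0:ℝ) T := fun t =>
    ⟨le_max_left _ _, max_le hT0 (min_le_right _ _)⟩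
  have hc_eq : ∀ t ∈ Set.Icc (0:ℝ) T, c t = t := fun t ht => by
    simp only [hc_def]
    rw [min_eq_left ht.2, max_eq_right ht.1]
  have hc_cont : Continuous c := continuous_const.max (continuous_id.min continuous_const)
  -- retraction onto the triangle
  have hπmem : ∀ p : ℝ × ℝ, ((c p.1, max (c p.1) (c p.2)) : ℝ × ℝ) ∈ triangle T := fun p =>
    ⟨(hc_mem p.1).1, le_max_left _ _, max_le (hc_mem p.1).2 (hc_mem p.2).2⟩
  set π : ℝ × ℝ → triangle T := fun p => ⟨(c p.1, max (c p.1) (c p.2)), hπmem p⟩ with hπ_def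
  have hπ_cont : Continuous π :=
    Continuous.subtype_mk ((hc_cont.comp continuous_fst).prodMk
      ((hc_cont.comp continuous_fst).max (hc_cont.comp continuous_snd))) _
  have hπ_eq : ∀ (q : ℝ × ℝ) (hq : q ∈ triangle T), π q = ⟨q, hq⟩ := by
    rintro ⟨s, t⟩ ⟨h0, h1, h2⟩
    have hcs : c s = s := hc_eq s ⟨h0, h1.trans h2⟩
    have hct : c t = t := hc_eq t ⟨h0.trans h1, h2⟩
    apply Subtype.ext
    simp only [hπ_def]
    rw [hcs, hct, max_eq_right h1]
  -- extension of `f`, `f'` in the time variable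
  set fe : ℝ → V → V := fun τ x => f (c τ) x with hfe_def
  set f'e : ℝ → V → V →L[ℝ] V := fun τ x => f' (c τ) x with hf'e_def
  have hfe_cont : Continuous fun q : ℝ × V => fe q.1 q.2 :=
    hf.comp_continuous ((hc_cont.comp continuous_fst).prodMk continuous_snd)
      fun q => Set.mk_mem_prod (hc_mem q.1) (Set.mem_univ _)
  have hf'e_cont : Continuous fun q : ℝ × V => f'e q.1 q.2 :=
    hf'.comp_continuous ((hc_cont.comp continuous_fst).prodMk continuous_snd)
      fun q => Set.mk_mem_prod (hc_mem q.1) (Set.mem_univ _)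
  have hfder : ∀ (τ : ℝ) (x : V), HasFDerivAt (fun v => fe τ v) (f'e τ x) x := fun τ x =>
    hdiff (c τ) (hc_mem τ) x
  -- membership of integration points
  have hmem : ∀ (p : triangle T) (τ : ℝ), τ ∈ Set.uIcc (p : ℝ × ℝ).1 (p : ℝ × ℝ).2 →
      (((p : ℝ × ℝ).1, τ) : ℝ × ℝ) ∈ triangle T := by
    rintro ⟨⟨s, t⟩, h0, h1, h2⟩ τ hτ
    rw [Set.uIcc_of_le h1] at hτ
    exact ⟨h0, hτ.1, hτ.2.trans h2⟩
  have hmemIcc : ∀ q : ℝ × ℝ, q ∈ triangle T → q.2 ∈ Set.Icc (0:ℝ) T := fun q hq =>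
    ⟨hq.1.trans hq.2.1, hq.2.2⟩
  -- continuity of parametrized interval integrals
  have key_cont : ∀ Φ : ℝ × ℝ → V, Continuous Φ →
      Continuous fun p : triangle T =>
        ∫ τ in (p : ℝ × ℝ).1..(p : ℝ × ℝ).2, Φ ((p : ℝ × ℝ).1, τ) := by
    intro Φ hΦ
    have hint : ∀ s a b : ℝ, IntervalIntegrable (fun τ => Φ (s, τ)) volume a b := fun s a b =>
      (hΦ.comp (continuous_const.prodMk continuous_id)).intervalIntegrable a b
    have huncurry : Continuous (Function.uncurry fun (p : ℝ × ℝ) (τ : ℝ) => Φ (p.1, τ)) :=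
      hΦ.comp ((continuous_fst.comp continuous_fst).prodMk continuous_snd)
    have h2 : Continuous fun p : ℝ × ℝ => ∫ τ in (0:ℝ)..p.2, Φ (p.1, τ) :=
      intervalIntegral.continuous_parametric_intervalIntegral_of_continuous huncurry
        continuous_snd
    have h1 : Continuous fun p : ℝ × ℝ => ∫ τ in (0:ℝ)..p.1, Φ (p.1, τ) :=
      intervalIntegral.continuous_parametric_intervalIntegral_of_continuous huncurry
        continuous_fst
    have heq : (fun p : ℝ × ℝ => ∫ τ in p.1..p.2, Φ (p.1, τ)) =
        fun p => (∫ τ in (0:ℝ)..p.2, Φ (p.1, τ)) - ∫ τ in (0:ℝ)..p.1, Φ (p.1, τ) :=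
      funext fun p =>
        (intervalIntegral.integral_interval_sub_left (hint p.1 0 p.2) (hint p.1 0 p.1)).symm
    have : Continuous fun p : ℝ × ℝ => (∫ τ in (0:ℝ)..p.2, Φ (p.1, τ)) - ∫ τ in (0:ℝ)..p.1, Φ (p.1, τ) :=
      h2.sub h1
    rw [← heq] at this
    exact this.comp continuous_subtype_val
  -- continuity of integrands
  have contI : ∀ y h : C(triangle T, V),
      Continuous fun q : ℝ × ℝ => (f'e q.2 (y (π q))) (h (π q)) := fun y h =>
    (hf'e_cont.comp (continuous_snd.prodMk (y.continuous.comp hπ_cont))).clm_apply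
      (h.continuous.comp hπ_cont)
  have contF : ∀ y : C(triangle T, V), Continuous fun q : ℝ × ℝ => fe q.2 (y (π q)) := fun y =>
    hfe_cont.comp (continuous_snd.prodMk (y.continuous.comp hπ_cont))
  have intgI : ∀ (y h : C(triangle T, V)) (s a b : ℝ),
      IntervalIntegrable (fun τ => (f'e τ (y (π (s, τ)))) (h (π (s, τ)))) volume a b :=
    fun y h s a b =>
      ((contI y h).comp (continuous_const.prodMk continuous_id)).intervalIntegrable a b
  have intgF : ∀ (y : C(triangle T, V)) (s a b : ℝ),
      IntervalIntegrable (fun τ => fe τ (y (π (s, τ)))) volume a b := fun y s a b =>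
    ((contF y).comp (continuous_const.prodMk continuous_id)).intervalIntegrable a b
  -- the sup of the pointwise operator norms
  let A : C(triangle T, V) → C(triangle T, V →L[ℝ] V) := fun y =>
    ⟨fun q => f'e (q : ℝ × ℝ).2 (y q),
      hf'e_cont.comp ((continuous_snd.comp continuous_subtype_val).prodMk y.continuous)⟩
  -- the candidate derivative, as a continuous map
  let Dmap : C(triangle T, V) → C(triangle T, V) → C(triangle T, V) := fun y h =>
    ⟨fun p => ∫ τ in (p : ℝ × ℝ).1..(p : ℝ × ℝ).2,
        (f'e τ (y (π ((p : ℝ × ℝ).1, τ)))) (h (π ((p : ℝ × ℝ).1, τ))),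
      key_cont _ (contI y h)⟩
  have normD : ∀ (y h : C(triangle T, V)) (p : triangle T),
      ‖Dmap y h p‖ ≤ ‖A y‖ * ‖h‖ * T := by
    intro y h p
    obtain ⟨h0, h1, h2⟩ := p.2
    have hb : ∀ τ ∈ Set.uIoc (p : ℝ × ℝ).1 (p : ℝ × ℝ).2,
        ‖(f'e τ (y (π ((p : ℝ × ℝ).1, τ)))) (h (π ((p : ℝ × ℝ).1, τ)))‖ ≤ ‖A y‖ * ‖h‖ := by
      intro τ hτ
      have hm : (((p : ℝ × ℝ).1, τ) : ℝ × ℝ) ∈ triangle T :=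
        hmem p τ (Set.uIoc_subset_uIcc hτ)
      rw [hπ_eq _ hm]
      calc ‖(f'e τ (y ⟨_, hm⟩)) (h ⟨_, hm⟩)‖
          ≤ ‖f'e τ (y ⟨_, hm⟩)‖ * ‖h ⟨_, hm⟩‖ := ContinuousLinearMap.le_opNorm _ _
        _ ≤ ‖A y‖ * ‖h‖ :=
          mul_le_mul ((A y).norm_coe_le_norm ⟨_, hm⟩) (h.norm_coe_le_norm _)
            (norm_nonneg _) (by positivity)
    calc ‖Dmap y h p‖ ≤ ‖A y‖ * ‖h‖ * |(p : ℝ × ℝ).2 - (p : ℝ × ℝ).1| :=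
        intervalIntegral.norm_integral_le_of_norm_le_const hb
      _ ≤ ‖A y‖ * ‖h‖ * T := by
        have habs : |(p : ℝ × ℝ).2 - (p : ℝ × ℝ).1| ≤ T := by
          rw [abs_of_nonneg (sub_nonneg.2 h1)]; linarith
        exact mul_le_mul_of_nonneg_left habs (by positivity)
  -- the candidate derivative, as a continuous linear map
  let D : C(triangle T, V) → C(triangle T, V) →L[ℝ] C(triangle T, V) := fun y =>
    LinearMap.mkContinuous
      { toFun := Dmap y
        map_add' := by
          intro h₁ h₂
          ext p
          simp only [Dmap, ContinuousMap.coe_mk, ContinuousMap.add_apply, map_add]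
          rw [intervalIntegral.integral_add (intgI y h₁ _ _ _) (intgI y h₂ _ _ _)]
        map_smul' := by
          intro m h
          ext p
          simp only [Dmap, ContinuousMap.coe_mk, ContinuousMap.smul_apply, _root_.map_smul,
            RingHom.id_apply]
          rw [intervalIntegral.integral_smul] }
      (‖A y‖ * T)
      (fun h => by
        refine (ContinuousMap.norm_le _ (by positivity)).mpr fun p => ?_
        calc ‖Dmap y h p‖ ≤ ‖A y‖ * ‖h‖ * T := normD y h p
          _ = ‖A y‖ * T * ‖h‖ := by ring)
  -- the abstract form of `F`
  let G : C(triangle T, V) → C(triangle T, V) := fun y =>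
    ⟨fun p => ∫ τ in (p : ℝ × ℝ).1..(p : ℝ × ℝ).2, fe τ (y (π ((p : ℝ × ℝ).1, τ))),
      key_cont _ (contF y)⟩
  have hFG : F = G := by
    funext y
    ext p
    rw [hF y p]
    show _ = ∫ τ in (p : ℝ × ℝ).1..(p : ℝ × ℝ).2, fe τ (y (π ((p : ℝ × ℝ).1, τ)))
    refine intervalIntegral.integral_congr fun τ hτ => ?_
    have hm := hmem p τ hτ
    rw [dif_pos hm, hπ_eq _ hm]
    simp only [hfe_def]
    rw [hc_eq τ ⟨hm.1.trans hm.2.1, hm.2.2⟩]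
  subst hFG
  -- uniform continuity near the graph of a fixed `y₀`
  have unif : ∀ (y₀ : C(triangle T, V)) (ε : ℝ), 0 < ε → ∃ δ > 0, ∀ (q : triangle T) (v : V),
      ‖v‖ < δ → ‖f'e (q : ℝ × ℝ).2 (y₀ q + v) - f'e (q : ℝ × ℝ).2 (y₀ q)‖ < ε := by
    intro y₀ ε hε
    have hΦ : Continuous fun z : triangle T × V => f'e ((z.1 : ℝ × ℝ)).2 (y₀ z.1 + z.2) :=
      hf'e_cont.comp ((continuous_snd.comp (continuous_subtype_val.comp continuous_fst)).prodMk
        ((y₀.continuous.comp continuous_fst).add continuous_snd))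
    have hs : IsCompact ((Set.univ : Set (triangle T)) ×ˢ ({0} : Set V)) :=
      isCompact_univ.prod isCompact_singleton
    have hr : {z : (V →L[ℝ] V) × (V →L[ℝ] V) | dist z.1 z.2 < ε} ∈ uniformity (V →L[ℝ] V) :=
      Metric.dist_mem_uniformity hε
    have H := hs.uniformContinuousAt_of_continuousAt _ (fun a _ => hΦ.continuousAt) hr
    rw [Metric.mem_uniformity_dist] at H
    obtain ⟨δ, hδpos, Hδ⟩ := H
    refine ⟨δ, hδpos, fun q v hv => ?_⟩
    have hd : dist ((q, (0:V)) : triangle T × V) ((q, v) : triangle T × V) < δ := by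
      rw [Prod.dist_eq, dist_self, dist_zero_left, max_eq_right (norm_nonneg v)]
      exact hv
    have hm := Hδ hd (Set.mk_mem_prod (Set.mem_univ q) rfl)
    simpa [dist_eq_norm, norm_sub_rev] using hm
  refine ⟨D, ?_, ?_, ?_⟩
  · -- continuity of `D`
    rw [continuous_iff_continuousAt]
    intro y₀
    rw [Metric.continuousAt_iff]
    intro ε hε
    have hε' : 0 < ε / (2 * T) := by positivity
    obtain ⟨δ, hδpos, Hδ⟩ := unif y₀ (ε / (2 * T)) hε'
    refine ⟨δ, hδpos, fun {y} hy => ?_⟩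
    rw [dist_eq_norm] at hy ⊢
    have hb : ‖D y - D y₀‖ ≤ ε / (2 * T) * T := by
      refine ContinuousLinearMap.opNorm_le_bound _ (by positivity) fun h => ?_
      rw [ContinuousLinearMap.sub_apply]
      refine (ContinuousMap.norm_le _ (by positivity)).mpr fun p => ?_
      rw [ContinuousMap.sub_apply]
      show ‖(∫ τ in (p : ℝ × ℝ).1..(p : ℝ × ℝ).2,
          (f'e τ (y (π ((p : ℝ × ℝ).1, τ)))) (h (π ((p : ℝ × ℝ).1, τ)))) -
          ∫ τ in (p : ℝ × ℝ).1..(p : ℝ × ℝ).2,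
          (f'e τ (y₀ (π ((p : ℝ × ℝ).1, τ)))) (h (π ((p : ℝ × ℝ).1, τ)))‖ ≤ _
      rw [← intervalIntegral.integral_sub (intgI y h _ _ _) (intgI y₀ h _ _ _)]
      have hbd : ∀ τ ∈ Set.uIoc (p : ℝ × ℝ).1 (p : ℝ × ℝ).2,
          ‖(f'e τ (y (π ((p : ℝ × ℝ).1, τ)))) (h (π ((p : ℝ × ℝ).1, τ))) -
            (f'e τ (y₀ (π ((p : ℝ × ℝ).1, τ)))) (h (π ((p : ℝ × ℝ).1, τ)))‖ ≤
            ε / (2 * T) * ‖h‖ := by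
        intro τ hτ
        have hm : (((p : ℝ × ℝ).1, τ) : ℝ × ℝ) ∈ triangle T :=
          hmem p τ (Set.uIoc_subset_uIcc hτ)
        rw [hπ_eq _ hm, ← ContinuousLinearMap.sub_apply]
        have hdiffnorm : ‖f'e τ (y ⟨_, hm⟩) - f'e τ (y₀ ⟨_, hm⟩)‖ ≤ ε / (2 * T) := by
          have hv : ‖y ⟨_, hm⟩ - y₀ ⟨_, hm⟩‖ < δ := by
            calc ‖y ⟨_, hm⟩ - y₀ ⟨_, hm⟩‖ = ‖(y - y₀) ⟨_, hm⟩‖ := by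
                  rw [ContinuousMap.sub_apply]
              _ ≤ ‖y - y₀‖ := (y - y₀).norm_coe_le_norm _
              _ < δ := hy
          have := Hδ ⟨_, hm⟩ (y ⟨_, hm⟩ - y₀ ⟨_, hm⟩) hv
          have heq : y₀ ⟨_, hm⟩ + (y ⟨_, hm⟩ - y₀ ⟨_, hm⟩) = y ⟨_, hm⟩ := by abel
          rw [heq] at this
          exact this.le
        calc ‖(f'e τ (y ⟨_, hm⟩) - f'e τ (y₀ ⟨_, hm⟩)) (h ⟨_, hm⟩)‖
            ≤ ‖f'e τ (y ⟨_, hm⟩) - f'e τ (y₀ ⟨_, hm⟩)‖ * ‖h ⟨_, hm⟩‖ :=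
              ContinuousLinearMap.le_opNorm _ _
          _ ≤ ε / (2 * T) * ‖h‖ :=
              mul_le_mul hdiffnorm (h.norm_coe_le_norm _) (norm_nonneg _) hε'.le
      obtain ⟨h0, h1, h2⟩ := p.2
      calc ‖∫ τ in (p : ℝ × ℝ).1..(p : ℝ × ℝ).2, _‖
          ≤ ε / (2 * T) * ‖h‖ * |(p : ℝ × ℝ).2 - (p : ℝ × ℝ).1| :=
            intervalIntegral.norm_integral_le_of_norm_le_const hbd
        _ ≤ ε / (2 * T) * ‖h‖ * T := by
            have habs : |(p : ℝ × ℝ).2 - (p : ℝ × ℝ).1| ≤ T := by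
              rw [abs_of_nonneg (sub_nonneg.2 h1)]; linarith
            exact mul_le_mul_of_nonneg_left habs (by positivity)
        _ = ε / (2 * T) * T * ‖h‖ := by ring
    calc ‖D y - D y₀‖ ≤ ε / (2 * T) * T := hb
      _ = ε / 2 := by field_simp
      _ < ε := by linarith
  · -- differentiability
    intro y
    rw [hasFDerivAt_iff_isLittleO_nhds_zero, Asymptotics.isLittleO_iff]
    intro ε hε
    have hε' : 0 < ε / T := by positivity
    obtain ⟨δ, hδpos, Hδ⟩ := unif y (ε / T) hε'
    rw [Metric.eventually_nhds_iff]
    refine ⟨δ, hδpos, fun {h} hh => ?_⟩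
    rw [dist_zero_right] at hh
    refine (ContinuousMap.norm_le _ (mul_nonneg hε.le (norm_nonneg _))).mpr fun p => ?_
    rw [ContinuousMap.sub_apply, ContinuousMap.sub_apply]
    have e1 : (G (y + h)) p - (G y) p - (D y) h p =
        ∫ τ in (p : ℝ × ℝ).1..(p : ℝ × ℝ).2,
          (fe τ (y (π ((p : ℝ × ℝ).1, τ)) + h (π ((p : ℝ × ℝ).1, τ))) -
            fe τ (y (π ((p : ℝ × ℝ).1, τ))) -
            (f'e τ (y (π ((p : ℝ × ℝ).1, τ)))) (h (π ((p : ℝ × ℝ).1, τ)))) := by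
      show (∫ τ in (p : ℝ × ℝ).1..(p : ℝ × ℝ).2, fe τ ((y + h) (π ((p : ℝ × ℝ).1, τ)))) -
          (∫ τ in (p : ℝ × ℝ).1..(p : ℝ × ℝ).2, fe τ (y (π ((p : ℝ × ℝ).1, τ)))) -
          ∫ τ in (p : ℝ × ℝ).1..(p : ℝ × ℝ).2,
            (f'e τ (y (π ((p : ℝ × ℝ).1, τ)))) (h (π ((p : ℝ × ℝ).1, τ))) = _
      rw [← intervalIntegral.integral_sub (intgF (y + h) _ _ _) (intgF y _ _ _),
        ← intervalIntegral.integral_sub ((intgF (y + h) _ _ _).sub (intgF y _ _ _))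
          (intgI y h _ _ _)]
      simp only [ContinuousMap.add_apply]
    rw [e1]
    have e2 : ∀ τ ∈ Set.uIoc (p : ℝ × ℝ).1 (p : ℝ × ℝ).2,
        ‖fe τ (y (π ((p : ℝ × ℝ).1, τ)) + h (π ((p : ℝ × ℝ).1, τ))) -
          fe τ (y (π ((p : ℝ × ℝ).1, τ))) -
          (f'e τ (y (π ((p : ℝ × ℝ).1, τ)))) (h (π ((p : ℝ × ℝ).1, τ)))‖ ≤ ε / T * ‖h‖ := by
      intro τ hτ
      have hm : (((p : ℝ × ℝ).1, τ) : ℝ × ℝ) ∈ triangle T :=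
        hmem p τ (Set.uIoc_subset_uIcc hτ)
      rw [hπ_eq _ hm]
      set a : V := y ⟨_, hm⟩ with ha_def
      set v : V := h ⟨_, hm⟩ with hv_def
      have hvh : ‖v‖ ≤ ‖h‖ := h.norm_coe_le_norm _
      have hsub : ∀ x ∈ Metric.closedBall a ‖h‖, ‖f'e τ x - f'e τ a‖ ≤ ε / T := by
        intro x hx
        have hxa : ‖x - a‖ < δ := by
          rw [Metric.mem_closedBall, dist_eq_norm] at hx
          exact lt_of_le_of_lt hx hh
        have := Hδ ⟨_, hm⟩ (x - a) hxa
        have heq : y ⟨_, hm⟩ + (x - a) = x := by rw [← ha_def]; abel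
        rw [heq] at this
        exact this.le
      have hmvt := Convex.norm_image_sub_le_of_norm_hasFDerivWithin_le'
        (f := fun x => fe τ x) (f' := fun x => f'e τ x) (φ := f'e τ a)
        (s := Metric.closedBall a ‖h‖)
        (fun x _ => (hfder τ x).hasFDerivWithinAt) hsub (convex_closedBall _ _)
        (Metric.mem_closedBall_self (norm_nonneg _))
        (show a + v ∈ Metric.closedBall a ‖h‖ by
          rw [Metric.mem_closedBall, dist_eq_norm]
          simpa using hvh)
      rw [add_sub_cancel_left] at hmvt
      calc ‖fe τ (a + v) - fe τ a - (f'e τ a) v‖ ≤ ε / T * ‖v‖ := hmvt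
        _ ≤ ε / T * ‖h‖ := mul_le_mul_of_nonneg_left hvh hε'.le
    obtain ⟨h0, h1, h2⟩ := p.2
    calc ‖∫ τ in (p : ℝ × ℝ).1..(p : ℝ × ℝ).2, _‖
        ≤ ε / T * ‖h‖ * |(p : ℝ × ℝ).2 - (p : ℝ × ℝ).1| :=
          intervalIntegral.norm_integral_le_of_norm_le_const e2
      _ ≤ ε / T * ‖h‖ * T := by
          have habs : |(p : ℝ × ℝ).2 - (p : ℝ × ℝ).1| ≤ T := by
            rw [abs_of_nonneg (sub_nonneg.2 h1)]; linarith
          exact mul_le_mul_of_nonneg_left habs (by positivity)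
      _ = ε * ‖h‖ := by field_simp
  · -- the formula
    intro y h p
    show (∫ τ in (p : ℝ × ℝ).1..(p : ℝ × ℝ).2,
        (f'e τ (y (π ((p : ℝ × ℝ).1, τ)))) (h (π ((p : ℝ × ℝ).1, τ)))) = _
    refine intervalIntegral.integral_congr fun τ hτ => ?_
    have hm := hmem p τ hτ
    rw [dif_pos hm, hπ_eq _ hm]
    simp only [hf'e_def]
    rw [hc_eq τ ⟨hm.1.trans hm.2.1, hm.2.2⟩]
end

section
/- Let X, Y, Z be nontrivial real Banach spaces, f ∈ C(X, Y), g ∈ C¹(Y, Z), assume g ∘ f ∈ C¹(X, Z), and assume that for every x ∈ X the operator g'(f(x)) ∈ L(Y,Z) is bijective with bounded inverse [g'(f(x))]⁻¹ ∈ L(Z,Y). Then f ∈ C¹(X, Y) and for all x ∈ X, f'(x) = [g'(f(x))]⁻¹ ∘ (g ∘ f)'(x). -/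
/-- Converse chain rule: if `f` is continuous, `g` is `C¹`,
`g ∘ f` is `C¹`, and each `g'(f(x))` is a bijective bounded operator with bounded
inverse `i x`, then `f` is `C¹` and `f'(x) = [g'(f(x))]⁻¹ ∘ (g ∘ f)'(x)`. -/
theorem converse_chain_rule
    {X Y Z : Type*} [NormedAddCommGroup X] [NormedSpace ℝ X] [CompleteSpace X]
    [Nontrivial X] [NormedAddCommGroup Y] [NormedSpace ℝ Y] [CompleteSpace Y]
    [Nontrivial Y] [NormedAddCommGroup Z] [NormedSpace ℝ Z] [CompleteSpace Z]
    [Nontrivial Z]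
    (f : X → Y) (g : Y → Z) (hf : Continuous f) (hg : ContDiff ℝ 1 g)
    (hgf : ContDiff ℝ 1 (g ∘ f))
    (i : X → Z →L[ℝ] Y)
    (hinv₁ : ∀ x : X, (i x).comp (fderiv ℝ g (f x)) = ContinuousLinearMap.id ℝ Y)
    (hinv₂ : ∀ x : X, (fderiv ℝ g (f x)).comp (i x) = ContinuousLinearMap.id ℝ Z) :
    ContDiff ℝ 1 f ∧ ∀ x : X, fderiv ℝ f x = (i x).comp (fderiv ℝ (g ∘ f) x) := by
  have key : ∀ x : X, ContDiffAt ℝ 1 f x := by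
    intro x
    set e : Y ≃L[ℝ] Z := ContinuousLinearEquiv.equivOfInverse (fderiv ℝ g (f x)) (i x)
      (fun y => ContinuousLinearMap.ext_iff.1 (hinv₁ x) y)
      (fun z => ContinuousLinearMap.ext_iff.1 (hinv₂ x) z) with he
    have hgc : ContDiffAt ℝ 1 g (f x) := hg.contDiffAt
    have hde : HasFDerivAt g (e : Y →L[ℝ] Z) (f x) :=
      (hg.differentiable one_ne_zero (f x)).hasFDerivAt
    have hinvC : ContDiffAt ℝ 1 (hgc.localInverse hde one_ne_zero) (g (f x)) :=
      hgc.to_localInverse hde one_ne_zero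
    have hs := (hgc.hasStrictFDerivAt' hde one_ne_zero).eventually_left_inverse
    have heq : (hgc.localInverse hde one_ne_zero) ∘ (g ∘ f) =ᶠ[nhds x] f := by
      have := hf.continuousAt.preimage_mem_nhds (x := x) hs
      filter_upwards [this] with x' hx'
      exact hx'
    exact ((hinvC.comp x hgf.contDiffAt).congr_of_eventuallyEq heq.symm)
  have hfd : ContDiff ℝ 1 f := contDiff_iff_contDiffAt.2 key
  refine ⟨hfd, fun x => ?_⟩
  have h1 : fderiv ℝ (g ∘ f) x = (fderiv ℝ g (f x)).comp (fderiv ℝ f x) :=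
    fderiv_comp x (hg.differentiable one_ne_zero (f x))
      (hfd.differentiable one_ne_zero x)
  rw [h1, ← ContinuousLinearMap.comp_assoc, hinv₁ x, ContinuousLinearMap.id_comp]
end
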